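/- For every infinite set $x$, there is an explicit surjection from $\mathrm{seq}^{1\text{-}1}(x)$ onto $\omega \times \mathrm{seq}^{1\text{-}1}(x)$, constructed without the axiom of choice. (Concretely: fix a bijection $p\colon \omega\times\omega \to \omega$ with $n \le p(m,n)$ for all $m,n$; map an injective sequence $t$ of length $p(m,n)$ to the pair $(m, t\restriction n)$.) -/

import Mathlib

lemma stmt3_aux (α : Type) [Infinite α] (l : List α) (hl : l.Nodup) (N : ℕ)
    (hN : l.length ≤ N) : ∃ t : List α, t.Nodup ∧ t.length = N ∧ t.take l.length = l := by
  haveI : Infinite {a : α // a ∉ l} := by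
    apply Set.infinite_coe_iff.2
    have : ({a : α | a ∈ l} : Set α).Finite := l.finite_toSet
    exact this.infinite_compl
  let e := Infinite.natEmbedding {a : α // a ∉ l}
  refine ⟨l ++ (List.range (N - l.length)).map (fun i => (e i : α)), ?_, ?_, ?_⟩
  · rw [List.nodup_append]
    refine ⟨hl, ?_, ?_⟩
    · exact List.nodup_range.map (fun i j hij => e.injective (Subtype.ext hij))
    · intro a ha b hb
      simp only [List.mem_map, List.mem_range] at hb
      obtain ⟨i, _, rfl⟩ := hb
      exact fun h => (e i).2 (h ▸ ha)
  · simp [List.length_append, List.length_map, List.length_range]; omega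
  · exact List.take_left

theorem stmt_3 (α : Type) [Infinite α] :
    ∃ f : {l : List α // l.Nodup} → ℕ × {l : List α // l.Nodup},
      Function.Surjective f := by
  refine ⟨fun t => ((Nat.unpair t.1.length).1,
    ⟨t.1.take (Nat.unpair t.1.length).2, t.2.sublist (List.take_sublist _ _)⟩), ?_⟩
  rintro ⟨m, ⟨l, hl⟩⟩
  obtain ⟨t, ht, htl, htk⟩ := stmt3_aux α l hl (Nat.pair m l.length) (Nat.right_le_pair m _)
  refine ⟨⟨t, ht⟩, ?_⟩
  simp only [htl, Nat.unpair_pair, htk]
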